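/- Let V be a real inner product space of dimension 2n+1 (n ≥ 1) equipped with an almost contact metric structure (φ, ξ, η). If Q is a self-adjoint linear endomorphism of V satisfying Qξ = 2nξ and Qφ + φQ = 4nφ, then the trace of Q equals 2n(2n+1). -/

import Mathlib

open RealInnerProductSpace

/-- On a real inner product space of dimension 2n+1 (n ≥ 1) with an
almost contact metric structure (φ, ξ, η) (where η x = ⟪x, ξ⟫), a self-adjoint
endomorphism Q with Qξ = 2nξ and Qφ + φQ = 4nφ has trace 2n(2n+1). -/
theorem stmt_0 {V : Type*} [NormedAddCommGroup V] [InnerProductSpace ℝ V]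
    [FiniteDimensional ℝ V] (n : ℕ) (hn : 1 ≤ n)
    (hdim : Module.finrank ℝ V = 2 * n + 1)
    (φ : V →ₗ[ℝ] V) (ξ : V)
    (hηξ : ⟪ξ, ξ⟫ = 1)
    (hφ2 : ∀ x : V, φ (φ x) = -x + ⟪x, ξ⟫ • ξ)
    (hmet : ∀ x y : V, ⟪φ x, φ y⟫ = ⟪x, y⟫ - ⟪x, ξ⟫ * ⟪y, ξ⟫)
    (Q : V →ₗ[ℝ] V)
    (hQsa : ∀ x y : V, ⟪Q x, y⟫ = ⟪x, Q y⟫)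
    (hQξ : Q ξ = ((2 * n : ℕ) : ℝ) • ξ)
    (hQφ : Q ∘ₗ φ + φ ∘ₗ Q = ((4 * n : ℕ) : ℝ) • φ) :
    LinearMap.trace ℝ V Q = 2 * (n : ℝ) * (2 * (n : ℝ) + 1) := by
  -- the linear functional x ↦ ⟪x, ξ⟫
  let f : V →ₗ[ℝ] ℝ :=
    { toFun := fun x => ⟪x, ξ⟫
      map_add' := fun x y => inner_add_left x y ξ
      map_smul' := fun c x => real_inner_smul_left x ξ c }
  -- the rank one projector P x = ⟪x, ξ⟫ • ξ
  let P : V →ₗ[ℝ] V := f.smulRight ξ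
  have hPapp : ∀ x, P x = ⟪x, ξ⟫ • ξ := fun x => rfl
  have hphisq : φ ∘ₗ φ = -LinearMap.id + P := by
    ext x
    simp [hφ2 x, hPapp]
  have hQP : Q ∘ₗ P = ((2 * n : ℕ) : ℝ) • P := by
    ext x
    simp only [LinearMap.comp_apply, hPapp, map_smul, hQξ, LinearMap.smul_apply]
    rw [smul_comm]
  -- trace of P is 1
  have htrP : LinearMap.trace ℝ V P = 1 := by
    have hsplit : P = (LinearMap.toSpanSingleton ℝ V ξ) ∘ₗ f := by
      ext x
      simp [hPapp, LinearMap.toSpanSingleton_apply, f]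
    have hfξ : f ∘ₗ LinearMap.toSpanSingleton ℝ V ξ = (1 : ℝ) • LinearMap.id := by
      ext
      simp [f, LinearMap.toSpanSingleton_apply, hηξ]
      left
      have h := real_inner_self_eq_norm_sq ξ
      rw [hηξ] at h
      nlinarith [norm_nonneg ξ]
    rw [hsplit, LinearMap.trace_comp_comm', hfξ]
    simp
  -- trace of φ² is -2n
  have htrphi2 : LinearMap.trace ℝ V (φ ∘ₗ φ) = -(2 * (n : ℝ)) := by
    rw [hphisq, map_add, map_neg, LinearMap.trace_id, htrP, hdim]
    push_cast
    ring
  -- trace of Q ∘ φ² is -4n²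
  have hcomp : Q ∘ₗ (φ ∘ₗ φ) + φ ∘ₗ (Q ∘ₗ φ) = ((4 * n : ℕ) : ℝ) • (φ ∘ₗ φ) := by
    have := congrArg (fun A => A ∘ₗ φ) hQφ
    simpa [LinearMap.add_comp, LinearMap.smul_comp, LinearMap.comp_assoc] using this
  have htrQphi2 : LinearMap.trace ℝ V (Q ∘ₗ (φ ∘ₗ φ)) = -(4 * (n : ℝ) ^ 2) := by
    have h1 := congrArg (LinearMap.trace ℝ V) hcomp
    have e1 : LinearMap.trace ℝ V (φ ∘ₗ (Q ∘ₗ φ)) = LinearMap.trace ℝ V (Q ∘ₗ (φ ∘ₗ φ)) := by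
      rw [LinearMap.trace_comp_comm', LinearMap.comp_assoc]
    rw [map_add, map_smul, e1, htrphi2] at h1
    have : LinearMap.trace ℝ V (Q ∘ₗ (φ ∘ₗ φ)) + LinearMap.trace ℝ V (Q ∘ₗ (φ ∘ₗ φ))
        = ((4 * n : ℕ) : ℝ) * (-(2 * (n : ℝ))) := by
      simpa using h1
    push_cast at this
    linarith
  -- Q = -(Q ∘ φ²) + Q ∘ P
  have hQdecomp : Q = -(Q ∘ₗ (φ ∘ₗ φ)) + Q ∘ₗ P := by
    rw [hphisq]
    ext x
    simp
  rw [hQdecomp, map_add, map_neg, htrQphi2, hQP, map_smul, htrP, smul_eq_mul]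
  push_cast
  ring
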